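/- Let G = (V,E) be a finite simple undirected graph on n vertices, where n is even, and let γ = n/2. If G is γ-robust, then there exists a subset V_S ⊆ V with |V_S| = γ+1 such that the induced subgraph of G on V_S has at least ⌊(γ²+2)/2⌋ edges. -/

import Mathlib

open Finset

variable {V : Type*}

/-- A finset `S` is `r`-reachable in `G` if some vertex of `S` has at least `r`
neighbors outside `S`. -/
def RReachable [Fintype V] [DecidableEq V] (G : SimpleGraph V) [DecidableRel G.Adj]
    (r : ℕ) (S : Finset V) : Prop :=
  ∃ i ∈ S, r ≤ (G.neighborFinset i \ S).card

/-- `G` is `r`-robust (for an integer `r ≥ 1`) if for every pair of nonempty disjoint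
subsets `S1, S2` of the vertex set, at least one of them is `r`-reachable. -/
def RRobust [Fintype V] [DecidableEq V] (G : SimpleGraph V) [DecidableRel G.Adj]
    (r : ℕ) : Prop :=
  1 ≤ r ∧ ∀ S1 S2 : Finset V, S1.Nonempty → S2.Nonempty → Disjoint S1 S2 →
    RReachable G r S1 ∨ RReachable G r S2

section Aux

variable [Fintype V] [DecidableEq V]

/-- number of non-neighbors of `v` inside `S` (other than `v` itself). -/
def bd (G : SimpleGraph V) [DecidableRel G.Adj] (v : V) (S : Finset V) : ℕ :=
  (S.filter (fun w => w ≠ v ∧ ¬ G.Adj v w)).card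

/-- twice the number of missing edges inside `T`. -/
def mu (G : SimpleGraph V) [DecidableRel G.Adj] (T : Finset V) : ℕ :=
  ∑ t ∈ T, bd G t (T.erase t)

variable (G : SimpleGraph V) [DecidableRel G.Adj]

lemma bd_mono {v : V} {S S' : Finset V} (h : S ⊆ S') : bd G v S ≤ bd G v S' :=
  card_le_card (filter_subset_filter _ h)

lemma bd_union {v : V} {S S' : Finset V} (h : Disjoint S S') :
    bd G v (S ∪ S') = bd G v S + bd G v S' := by
  unfold bd
  rw [filter_union, card_union_of_disjoint (h.mono (filter_subset _ _) (filter_subset _ _))]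

lemma bd_insert {v a : V} {S : Finset V} (ha : a ∉ S) :
    bd G v (insert a S) = bd G v S + (if a ≠ v ∧ ¬ G.Adj v a then 1 else 0) := by
  unfold bd
  rw [filter_insert]
  split
  · rw [card_insert_of_notMem (fun h => ha (mem_filter.1 h).1)]
  · simp

lemma bd_pos {v w : V} {S : Finset V} (hw : w ∈ S) (h1 : w ≠ v) (h2 : ¬ G.Adj v w) :
    1 ≤ bd G v S :=
  card_pos.2 ⟨w, mem_filter.2 ⟨hw, h1, h2⟩⟩

lemma bd_erase_le {v w : V} {S : Finset V} : bd G v S ≤ bd G v (S.erase w) + 1 := by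
  have hsub : S ⊆ insert w (S.erase w) := by
    intro x hx
    by_cases hxw : x = w
    · exact hxw ▸ mem_insert_self _ _
    · exact mem_insert_of_mem (mem_erase.2 ⟨hxw, hx⟩)
  calc bd G v S ≤ bd G v (insert w (S.erase w)) := bd_mono G hsub
    _ = bd G v (S.erase w) + (if w ≠ v ∧ ¬ G.Adj v w then 1 else 0) :=
        bd_insert G (notMem_erase _ _)
    _ ≤ bd G v (S.erase w) + 1 := by split <;> omega

lemma mu_insert {a : V} {S : Finset V} (ha : a ∉ S) :
    mu G (insert a S) = mu G S + 2 * bd G a S := by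
  unfold mu
  rw [sum_insert ha, erase_insert ha]
  have h2 : ∀ w ∈ S, bd G w ((insert a S).erase w)
      = bd G w (S.erase w) + (if a ≠ w ∧ ¬ G.Adj w a then 1 else 0) := by
    intro w hw
    have hwa : a ≠ w := fun h => ha (h ▸ hw)
    rw [Finset.erase_insert_of_ne hwa, bd_insert G (fun h => ha (mem_of_mem_erase h))]
  rw [sum_congr rfl h2, sum_add_distrib]
  have h3 : (∑ w ∈ S, if a ≠ w ∧ ¬ G.Adj w a then 1 else 0) = bd G a S := by
    unfold bd
    rw [card_filter]
    refine sum_congr rfl (fun w hw => ?_)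
    congr 1
    simp only [eq_iff_iff]
    constructor
    · rintro ⟨h1, h2⟩; exact ⟨h1.symm, fun h => h2 h.symm⟩
    · rintro ⟨h1, h2⟩; exact ⟨h1.symm, fun h => h2 h.symm⟩
  rw [h3]
  omega

lemma mu_erase {t : V} {T : Finset V} (ht : t ∈ T) :
    mu G T = mu G (T.erase t) + 2 * bd G t (T.erase t) := by
  conv_lhs => rw [← insert_erase ht]
  exact mu_insert G (notMem_erase _ _)

lemma mu_even (T : Finset V) : ∃ m, mu G T = 2 * m := by
  classical
  induction T using Finset.induction with
  | empty => exact ⟨0, by simp [mu]⟩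
  | insert _ _ ha ih =>
      obtain ⟨m, hm⟩ := ih
      exact ⟨m + bd G _ _, by rw [mu_insert G ha, hm]; ring⟩

/-- count of neighbors outside `S` plus non-neighbors outside `S` is everything outside. -/
lemma nbr_count {i : V} {S : Finset V} (hi : i ∈ S) :
    (G.neighborFinset i \ S).card + bd G i (univ \ S) = (univ \ S).card := by
  have h1 : G.neighborFinset i \ S = (univ \ S).filter (fun w => G.Adj i w) := by
    ext w
    simp only [mem_sdiff, SimpleGraph.mem_neighborFinset, mem_filter, mem_univ, true_and]
    tauto
  have h2 : bd G i (univ \ S) = ((univ \ S).filter (fun w => ¬ G.Adj i w)).card := by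
    unfold bd
    congr 1
    refine filter_congr (fun w hw => ?_)
    have : w ≠ i := fun h => (mem_sdiff.1 hw).2 (h ▸ hi)
    simp [this]
  rw [h1, h2, card_filter_add_card_filter_not]

/-- The edge count of the induced subgraph, tied to `mu`. -/
lemma edges_count (T : Finset V) :
    ∃ E : Finset (Sym2 V), (↑E : Set (Sym2 V)) = {e : Sym2 V | e ∈ G.edgeSet ∧ ∀ v ∈ e, v ∈ T}
      ∧ 2 * E.card + mu G T = T.card * (T.card - 1) := by
  classical
  let H : SimpleGraph V :=
    { Adj := fun a b => a ≠ b ∧ G.Adj a b ∧ a ∈ T ∧ b ∈ T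
      symm := ⟨by rintro a b ⟨h1, h2, h3, h4⟩; exact ⟨h1.symm, h2.symm, h4, h3⟩⟩
      loopless := ⟨fun a h => h.1 rfl⟩ }
  haveI : DecidableRel H.Adj :=
    fun a b => inferInstanceAs (Decidable (a ≠ b ∧ G.Adj a b ∧ a ∈ T ∧ b ∈ T))
  refine ⟨H.edgeFinset, ?_, ?_⟩
  · rw [SimpleGraph.coe_edgeFinset]
    ext e
    induction e with
    | _ a b =>
      simp only [SimpleGraph.mem_edgeSet, Set.mem_setOf_eq, Sym2.mem_iff]
      constructor
      · rintro ⟨h1, h2, h3, h4⟩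
        exact ⟨h2, by rintro v (rfl | rfl) <;> assumption⟩
      · rintro ⟨h2, hall⟩
        exact ⟨G.ne_of_adj h2, h2, hall a (Or.inl rfl), hall b (Or.inr rfl)⟩
  · have hdeg : ∀ v ∈ T, H.degree v + bd G v (T.erase v) = T.card - 1 := by
      intro v hv
      have h1 : H.neighborFinset v = (T.erase v).filter (fun w => G.Adj v w) := by
        ext w
        simp only [SimpleGraph.mem_neighborFinset, mem_filter, mem_erase]
        constructor
        · rintro ⟨h1, h2, _, h4⟩; exact ⟨⟨fun h => h1 h.symm, h4⟩, h2⟩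
        · rintro ⟨⟨h1, h2⟩, h3⟩; exact ⟨fun h => h1 h.symm, h3, hv, h2⟩
      have h2 : bd G v (T.erase v) = ((T.erase v).filter (fun w => ¬ G.Adj v w)).card := by
        unfold bd
        congr 1
        refine filter_congr (fun w hw => ?_)
        have : w ≠ v := (mem_erase.1 hw).1
        simp [this]
      rw [SimpleGraph.degree, h1, h2, card_filter_add_card_filter_not,
        card_erase_of_mem hv]
    have hdeg0 : ∀ v ∉ T, H.degree v = 0 := by
      intro v hv
      rw [SimpleGraph.degree, card_eq_zero]
      ext w
      simp only [SimpleGraph.mem_neighborFinset, notMem_empty, iff_false]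
      rintro ⟨_, _, h3, _⟩
      exact hv h3
    have hsum := H.sum_degrees_eq_twice_card_edges
    rw [← sum_subset (subset_univ T) (fun x _ hx => hdeg0 x hx)] at hsum
    have hsum2 : ∑ v ∈ T, (H.degree v + bd G v (T.erase v)) = ∑ _v ∈ T, (T.card - 1) :=
      sum_congr rfl hdeg
    rw [sum_add_distrib, hsum, sum_const, smul_eq_mul] at hsum2
    unfold mu
    omega

end Aux

section Main

variable [Fintype V] [DecidableEq V]

set_option maxHeartbeats 6000000 in
/-- Main combinatorial lemma: a `γ`-robust graph on `2γ` vertices has a `(γ+1)`-set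
with few missing edges (`mu` counts twice the missing edges). -/
theorem main_lemma (G : SimpleGraph V) [DecidableRel G.Adj] (γ : ℕ)
    (hcard : Fintype.card V = 2 * γ) (hrob : RRobust G γ) :
    ∃ T : Finset V, T.card = γ + 1 ∧ mu G T + 2 ≤ γ + γ % 2 := by
  classical
  obtain ⟨hγ1, hrob2⟩ := hrob
  have hVcard : (univ : Finset V).card = 2 * γ := by simp [hcard]
  -- helper: not reachable
  have nreach : ∀ S : Finset V, (univ \ S).card ≤ γ → (∀ i ∈ S, 1 ≤ bd G i (univ \ S)) →
      ¬ RReachable G γ S := by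
    rintro S hS h ⟨i, hi, hcnt⟩
    have hkey := nbr_count G hi
    have := h i hi
    omega
  by_cases hγ : γ = 1
  · -- two vertices
    subst hγ
    refine ⟨univ, by omega, ?_⟩
    obtain ⟨a, b, hab, huniv⟩ := Finset.card_eq_two.1 (by omega : (univ : Finset V).card = 2)
    have hadj : G.Adj a b := by
      have h1 : ({a} : Finset V).Nonempty := ⟨a, mem_singleton_self a⟩
      have h2 : ({b} : Finset V).Nonempty := ⟨b, mem_singleton_self b⟩
      have hd : Disjoint ({a} : Finset V) {b} := by
        simpa [Finset.disjoint_singleton] using hab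
      have hmemuniv : ∀ x : V, x = a ∨ x = b := by
        intro x
        have : x ∈ (univ : Finset V) := mem_univ x
        rw [huniv] at this
        simpa using this
      rcases hrob2 {a} {b} h1 h2 hd with ⟨i, hi, hc⟩ | ⟨i, hi, hc⟩
      · rw [mem_singleton] at hi
        subst hi
        have : (G.neighborFinset i \ {i}).Nonempty := by
          rw [← card_pos]; omega
        obtain ⟨w, hw⟩ := this
        rw [mem_sdiff, SimpleGraph.mem_neighborFinset] at hw
        rcases hmemuniv w with rfl | rfl
        · exact absurd (G.ne_of_adj hw.1) (by simp)
        · exact hw.1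
      · rw [mem_singleton] at hi
        subst hi
        have : (G.neighborFinset i \ {i}).Nonempty := by
          rw [← card_pos]; omega
        obtain ⟨w, hw⟩ := this
        rw [mem_sdiff, SimpleGraph.mem_neighborFinset] at hw
        rcases hmemuniv w with rfl | rfl
        · exact (hw.1.symm : G.Adj _ _)
        · exact absurd (G.ne_of_adj hw.1) (by simp)
    have hmu : mu G univ = 0 := by
      unfold mu
      refine sum_eq_zero (fun t ht => ?_)
      unfold bd
      rw [card_eq_zero, filter_eq_empty_iff]
      rintro w hw ⟨hwt, hnadj⟩
      have hw' : w = a ∨ w = b := by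
        have : w ∈ (univ : Finset V) := mem_univ w
        rw [huniv] at this; simpa using this
      have ht' : t = a ∨ t = b := by
        have : t ∈ (univ : Finset V) := mem_univ t
        rw [huniv] at this; simpa using this
      rcases hw' with rfl | rfl <;> rcases ht' with rfl | rfl <;>
        first
          | exact hwt rfl
          | exact hnadj hadj
          | exact hnadj hadj.symm
    omega
  · have hγ2 : 2 ≤ γ := by omega
    set C := Finset.powersetCard (γ + 1) (univ : Finset V) with hCdef
    have cardOf : ∀ T ∈ C, T.card = γ + 1 := fun T h => Finset.mem_powersetCard_univ.1 h
    have complCard : ∀ T ∈ C, (univ \ T).card = γ - 1 := by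
      intro T h
      rw [card_sdiff_of_subset (subset_univ T), hVcard, cardOf T h]
      omega
    have hCne : C.Nonempty := by
      obtain ⟨T, _, hT⟩ := Finset.exists_subset_card_eq (by omega : γ + 1 ≤ (univ : Finset V).card)
      exact ⟨T, Finset.mem_powersetCard_univ.2 hT⟩
    obtain ⟨T₀, hT₀C, hT₀min⟩ := C.exists_min_image (mu G) hCne
    -- swap minimality
    have swapmin : ∀ T ∈ C, (∀ T' ∈ C, mu G T ≤ mu G T') →
        ∀ t ∈ T, ∀ d, d ∉ T → bd G t (T.erase t) ≤ bd G d (T.erase t) := by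
      intro T hT hmin t ht d hd
      have hd' : d ∉ T.erase t := fun h => hd (mem_of_mem_erase h)
      have h1 : insert d (T.erase t) ∈ C := by
        rw [Finset.mem_powersetCard_univ, card_insert_of_notMem hd', card_erase_of_mem ht,
          cardOf T hT]
        omega
      have h2 := hmin _ h1
      have e1 : mu G T = mu G (T.erase t) + 2 * bd G t (T.erase t) := mu_erase G ht
      have e2 : mu G (insert d (T.erase t)) = mu G (T.erase t) + 2 * bd G d (T.erase t) :=
        mu_insert G hd'
      omega
    -- witness from robustness
    have witness : ∀ T ∈ C, ∃ d, d ∉ T ∧ bd G d T ≤ 1 := by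
      intro T hT
      have hTcard := cardOf T hT
      have hDcard := complCard T hT
      have hTne : T.Nonempty := card_pos.1 (by omega)
      have hDne : (univ \ T).Nonempty := card_pos.1 (by omega)
      have hnot : ¬ RReachable G γ T := by
        rintro ⟨i, hi, hc⟩
        have hsub : G.neighborFinset i \ T ⊆ univ \ T :=
          sdiff_subset_sdiff (subset_univ _) Subset.rfl
        have := card_le_card hsub
        omega
      have hre : RReachable G γ (univ \ T) := by
        rcases hrob2 (univ \ T) T hDne hTne sdiff_disjoint with h | h
        · exact h
        · exact absurd h hnot
      obtain ⟨d, hd, hc⟩ := hre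
      have hdT : d ∉ T := (mem_sdiff.1 hd).2
      have key := nbr_count G hd
      have hcompl : univ \ (univ \ T) = T := by
        ext x
        simp [mem_sdiff]
      rw [hcompl] at key
      exact ⟨d, hdT, by omega⟩
    -- analysis of the minimizer T₀
    obtain ⟨d₀, hd₀T, hd₀bd⟩ := witness T₀ hT₀C
    have hAllLe1 : ∀ t ∈ T₀, bd G t (T₀.erase t) ≤ 1 := by
      intro t ht
      exact le_trans (swapmin T₀ hT₀C hT₀min t ht d₀ hd₀T)
        (le_trans (bd_mono G (erase_subset _ _)) hd₀bd)
    by_cases hz : bd G d₀ T₀ = 0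
    · have hall0 : ∀ t ∈ T₀, bd G t (T₀.erase t) = 0 := by
        intro t ht
        have := le_trans (swapmin T₀ hT₀C hT₀min t ht d₀ hd₀T)
          (le_trans (bd_mono G (erase_subset _ _)) (le_of_eq hz))
        omega
      have hmu0 : mu G T₀ = 0 := sum_eq_zero hall0
      exact ⟨T₀, cardOf _ hT₀C, by omega⟩
    · have hd1 : bd G d₀ T₀ = 1 := by omega
      obtain ⟨w₀, hw₀⟩ := card_eq_one.1 hd1
      have hw₀mem : w₀ ∈ T₀ ∧ w₀ ≠ d₀ ∧ ¬ G.Adj d₀ w₀ := by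
        have : w₀ ∈ T₀.filter (fun w => w ≠ d₀ ∧ ¬ G.Adj d₀ w) := by
          rw [hw₀]; exact mem_singleton_self w₀
        have := mem_filter.1 this
        exact ⟨this.1, this.2⟩
      have hbdw₀ : bd G d₀ (T₀.erase w₀) = 0 := by
        unfold bd
        rw [card_eq_zero]
        rw [filter_erase, hw₀]
        simp
      have hzero : bd G w₀ (T₀.erase w₀) = 0 := by
        have := le_trans (swapmin T₀ hT₀C hT₀min w₀ hw₀mem.1 d₀ hd₀T) (le_of_eq hbdw₀)
        omega
      have hmule : mu G T₀ ≤ γ := by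
        have h1 : mu G T₀ = ∑ t ∈ T₀.erase w₀, bd G t (T₀.erase t) := by
          unfold mu
          rw [← sum_erase_add T₀ _ hw₀mem.1, hzero, add_zero]
        have h2 : ∑ t ∈ T₀.erase w₀, bd G t (T₀.erase t) ≤ (T₀.erase w₀).card • 1 :=
          sum_le_card_nsmul _ _ 1 (fun x hx => hAllLe1 x (mem_of_mem_erase hx))
        rw [card_erase_of_mem hw₀mem.1, cardOf _ hT₀C] at h2
        simp only [smul_eq_mul, mul_one] at h2
        omega
      obtain ⟨m₀, hm₀⟩ := mu_even G T₀
      by_cases hodd : γ % 2 = 1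
      · exact ⟨T₀, cardOf _ hT₀C, by omega⟩
      · have heven : γ % 2 = 0 := by omega
        by_cases hfin : mu G T₀ + 2 ≤ γ
        · exact ⟨T₀, cardOf _ hT₀C, by omega⟩
        exfalso
        have hmuT₀ : mu G T₀ = γ := by omega
        -- ENDGAME
        have hmuT₀' : mu G T₀ = γ := hmuT₀
        -- structure of any minimizer with mu = γ
        have structureL : ∀ T ∈ C, (∀ T' ∈ C, mu G T ≤ mu G T') → mu G T = γ →
            ∃ u d, u ∈ T ∧ d ∉ T ∧ bd G u (T.erase u) = 0 ∧ bd G d T = 1 ∧ d ≠ u ∧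
              ¬ G.Adj d u ∧ (∀ t ∈ T, bd G t (T.erase t) = 0 → t = u) ∧
              (∀ t ∈ T.erase u, bd G t (T.erase t) = 1) := by
          intro T hTC hTmin hTmu
          obtain ⟨d, hdT, hdbd⟩ := witness T hTC
          have hall : ∀ t ∈ T, bd G t (T.erase t) ≤ 1 := fun t ht =>
            le_trans (swapmin T hTC hTmin t ht d hdT)
              (le_trans (bd_mono G (erase_subset _ _)) hdbd)
          have hd1 : bd G d T = 1 := by
            rcases Nat.eq_zero_or_pos (bd G d T) with h0 | hpos
            · exfalso
              have hall0 : ∀ t ∈ T, bd G t (T.erase t) = 0 := by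
                intro t ht
                have := le_trans (swapmin T hTC hTmin t ht d hdT)
                  (le_trans (bd_mono G (erase_subset _ _)) (le_of_eq h0))
                omega
              have : mu G T = 0 := sum_eq_zero hall0
              omega
            · omega
          obtain ⟨u, hu⟩ := card_eq_one.1 hd1
          have humem : u ∈ T ∧ u ≠ d ∧ ¬ G.Adj d u := by
            have : u ∈ T.filter (fun w => w ≠ d ∧ ¬ G.Adj d w) := by
              rw [hu]; exact mem_singleton_self u
            have h := mem_filter.1 this
            exact ⟨h.1, h.2⟩
          have hbdero : bd G d (T.erase u) = 0 := by
            unfold bd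
            rw [card_eq_zero, filter_erase, hu]
            simp
          have hu0 : bd G u (T.erase u) = 0 := by
            have := le_trans (swapmin T hTC hTmin u humem.1 d hdT) (le_of_eq hbdero)
            omega
          have huniq : ∀ t ∈ T, bd G t (T.erase t) = 0 → t = u := by
            intro t ht h0
            by_contra hne
            have htu : t ∈ T.erase u := mem_erase.2 ⟨hne, ht⟩
            have h1 : mu G T = ∑ x ∈ (T.erase u).erase t, bd G x (T.erase x) := by
              unfold mu
              rw [← sum_erase_add T _ humem.1, hu0, add_zero,
                ← sum_erase_add (T.erase u) _ htu, h0, add_zero]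
            have h2 : ∑ x ∈ (T.erase u).erase t, bd G x (T.erase x)
                ≤ ((T.erase u).erase t).card • 1 :=
              sum_le_card_nsmul _ _ 1
                (fun x hx => hall x (mem_of_mem_erase (mem_of_mem_erase hx)))
            rw [card_erase_of_mem htu, card_erase_of_mem humem.1, cardOf T hTC] at h2
            simp only [smul_eq_mul, mul_one] at h2
            omega
          have hones : ∀ t ∈ T.erase u, bd G t (T.erase t) = 1 := by
            intro t ht
            have h1 := hall t (mem_of_mem_erase ht)
            have h2 : bd G t (T.erase t) ≠ 0 :=
              fun h0 => (mem_erase.1 ht).1 (huniq t (mem_of_mem_erase ht) h0)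
            omega
          exact ⟨u, d, humem.1, hdT, hu0, hd1, fun h => humem.2.1 h.symm, humem.2.2,
            huniq, hones⟩
        obtain ⟨u₀, d₀', hu₀T, _, hu₀0, _, _, _, _, _⟩ := structureL T₀ hT₀C hT₀min hmuT₀'
        -- tie-break choice
        set U := ((C.filter (fun T => mu G T = γ)) ×ˢ (univ : Finset V)).filter
            (fun q => q.2 ∈ q.1 ∧ bd G q.2 (q.1.erase q.2) = 0) with hUdef
        have hUne : U.Nonempty := by
          refine ⟨(T₀, u₀), ?_⟩
          rw [hUdef, mem_filter, mem_product, mem_filter]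
          exact ⟨⟨⟨hT₀C, hmuT₀'⟩, mem_univ _⟩, hu₀T, hu₀0⟩
        obtain ⟨p, hpU, hpmin⟩ := U.exists_min_image (fun q => bd G q.2 (univ.erase q.2)) hUne
        obtain ⟨T, u⟩ := p
        have hp1 := mem_filter.1 hpU
        have hp3 := mem_filter.1 (mem_product.1 hp1.1).1
        have hTC : T ∈ C := hp3.1
        have hTmu : mu G T = γ := hp3.2
        have huT : u ∈ T := hp1.2.1
        have hu0 : bd G u (T.erase u) = 0 := hp1.2.2
        have hTmin : ∀ T' ∈ C, mu G T ≤ mu G T' := by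
          intro T' h
          have := hT₀min T' h
          omega
        obtain ⟨u', d0, hu'T, hd0T, hu'0, hd0bd, hd0ne', hd0adj', huniq, hones'⟩ :=
          structureL T hTC hTmin hTmu
        have huu : u = u' := huniq u huT hu0
        subst huu
        set M := T.erase u with hMdef
        have hTcard : T.card = γ + 1 := cardOf T hTC
        have hMcard : M.card = γ := by
          rw [hMdef, card_erase_of_mem hu'T, hTcard]
          omega
        have hMsubT : M ⊆ T := erase_subset _ _
        have huM : u ∉ M := notMem_erase _ _
        set Dc := univ \ T with hDdef
        have hDcard : Dc.card = γ - 1 := complCard T hTC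
        have hd0D : d0 ∈ Dc := mem_sdiff.2 ⟨mem_univ _, hd0T⟩
        have hDT : ∀ x ∈ Dc, x ∉ T := fun x hx => (mem_sdiff.1 hx).2
        have he1 : ∀ d, d ∉ T → 1 ≤ bd G d T := by
          intro d hd
          have hMne : M.Nonempty := card_pos.1 (by omega)
          obtain ⟨t, htM⟩ := hMne
          have h1 := hones' t htM
          have h2 := swapmin T hTC hTmin t (hMsubT htM) d hd
          calc 1 = bd G t (T.erase t) := h1.symm
            _ ≤ bd G d (T.erase t) := h2
            _ ≤ bd G d T := bd_mono G (erase_subset _ _)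
        have he2 : ∀ d, d ∉ T → bd G d T = 1 → ¬ G.Adj d u := by
          intro d hd h1
          obtain ⟨w, hw⟩ := card_eq_one.1 h1
          have hwmem : w ∈ T ∧ w ≠ d ∧ ¬ G.Adj d w := by
            have : w ∈ T.filter (fun x => x ≠ d ∧ ¬ G.Adj d x) := by
              rw [hw]; exact mem_singleton_self w
            have h := mem_filter.1 this
            exact ⟨h.1, h.2⟩
          have hbd0 : bd G d (T.erase w) = 0 := by
            unfold bd
            rw [card_eq_zero, filter_erase, hw]
            simp
          have hwu : w = u := by
            by_contra hwu
            have hwM : w ∈ M := mem_erase.2 ⟨hwu, hwmem.1⟩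
            have := swapmin T hTC hTmin w hwmem.1 d hd
            rw [hones' w hwM, hbd0] at this
            omega
          exact hwu ▸ hwmem.2.2
        -- there is an L-vertex z
        have hzlem : ∃ z ∈ M, bd G z Dc = 0 := by
          have hMne : M.Nonempty := card_pos.1 (by omega)
          obtain ⟨v, hvM⟩ := hMne
          have hvT : v ∈ T := hMsubT hvM
          have hvu : v ≠ u := (mem_erase.1 hvM).1
          have hvD : v ∉ Dc := fun h => hDT v h hvT
          have hS1card : (insert v Dc).card = γ := by
            rw [card_insert_of_notMem hvD, hDcard]; omega
          have hS2c : univ \ insert v Dc = T.erase v := by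
            ext x
            simp only [hDdef, mem_sdiff, mem_univ, true_and, mem_insert, mem_erase]
            tauto
          have hS1c : univ \ (T.erase v) = insert v Dc := by
            ext x
            simp only [hDdef, mem_sdiff, mem_univ, true_and, mem_insert, mem_erase]
            tauto
          have hkill1 : ¬ RReachable G γ (insert v Dc) := by
            apply nreach
            · rw [hS2c, card_erase_of_mem hvT, hTcard]; omega
            · intro i hi
              rw [hS2c]
              rcases mem_insert.1 hi with rfl | hiD
              · exact le_of_eq (hones' i hvM).symm
              · have hiT : i ∉ T := hDT i hiD
                rcases Nat.lt_or_ge (bd G i T) 2 with hlt | hge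
                · have h1 : bd G i T = 1 := by have := he1 i hiT; omega
                  have hnadj := he2 i hiT h1
                  refine bd_pos G (w := u) (mem_erase.2 ⟨fun h => hvu h.symm, hu'T⟩) ?_ ?_
                  · intro h; exact hiT (h ▸ hu'T)
                  · exact hnadj
                · have := bd_erase_le G (v := i) (w := v) (S := T)
                  omega
          have hS2ne : (T.erase v).Nonempty := by
            apply card_pos.1
            rw [card_erase_of_mem hvT, hTcard]
            omega
          have hS1ne : (insert v Dc).Nonempty := insert_nonempty _ _
          have hdisj : Disjoint (insert v Dc) (T.erase v) := by
            rw [disjoint_left]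
            intro x hx hx2
            rcases mem_insert.1 hx with rfl | hxD
            · exact (mem_erase.1 hx2).1 rfl
            · exact hDT x hxD (mem_of_mem_erase hx2)
          have hreach2 : RReachable G γ (T.erase v) := by
            rcases hrob2 _ _ hS1ne hS2ne hdisj with h | h
            · exact absurd h hkill1
            · exact h
          obtain ⟨z, hz, hzc⟩ := hreach2
          have hzkey := nbr_count G hz
          rw [hS1c] at hzkey
          have hzbd : bd G z (insert v Dc) = 0 := by
            rw [hS1card] at hzkey
            omega
          have hzT : z ∈ T := mem_of_mem_erase hz
          have hzu : z ≠ u := by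
            rintro rfl
            have : 1 ≤ bd G z (insert v Dc) :=
              bd_pos G (mem_insert_of_mem hd0D) hd0ne' (fun h => hd0adj' h.symm)
            omega
          refine ⟨z, mem_erase.2 ⟨hzu, hzT⟩, ?_⟩
          have := bd_mono G (subset_insert v Dc) (v := z)
          omega
        obtain ⟨z, hzM, hzD⟩ := hzlem
        -- the mate function
        have hmate : ∀ t, t ∈ M → ∃ w, (w ∈ T.erase t ∧ w ≠ t ∧ ¬ G.Adj t w) ∧
            (∀ w', w' ∈ T.erase t → w' ≠ t → ¬ G.Adj t w' → w' = w) := by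
          intro t htM
          obtain ⟨w, hw⟩ := card_eq_one.1 (hones' t htM)
          have hwmem : w ∈ (T.erase t).filter (fun x => x ≠ t ∧ ¬ G.Adj t x) := by
            rw [hw]; exact mem_singleton_self w
          have h1 := mem_filter.1 hwmem
          refine ⟨w, ⟨h1.1, h1.2⟩, fun w' h1' h2' h3' => ?_⟩
          have : w' ∈ (T.erase t).filter (fun x => x ≠ t ∧ ¬ G.Adj t x) :=
            mem_filter.2 ⟨h1', h2', h3'⟩
          rw [hw] at this
          exact mem_singleton.1 this
        choose! f hf1 hf2 using hmate
        have hfT : ∀ t ∈ M, f t ∈ T := fun t ht => mem_of_mem_erase (hf1 t ht).1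
        have hfne : ∀ t ∈ M, f t ≠ t := fun t ht => (hf1 t ht).2.1
        have hfnadj : ∀ t ∈ M, ¬ G.Adj t (f t) := fun t ht => (hf1 t ht).2.2
        have hfM : ∀ t ∈ M, f t ∈ M := by
          intro t ht
          refine mem_erase.2 ⟨?_, hfT t ht⟩
          intro hfu
          have htu : t ≠ u := (mem_erase.1 ht).1
          have : 1 ≤ bd G u M := by
            refine bd_pos G (w := t) ht htu ?_
            intro h
            exact hfnadj t ht (by rw [hfu]; exact h.symm)
          omega
        have hff : ∀ t ∈ M, f (f t) = t := by
          intro t ht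
          have h2 := hfM t ht
          refine (hf2 (f t) h2 t ?_ ?_ ?_).symm
          · exact mem_erase.2 ⟨Ne.symm (hfne t ht), hMsubT ht⟩
          · exact Ne.symm (hfne t ht)
          · exact fun h => hfnadj t ht h.symm
        -- tie-break consequences
        set m1 := f z with hm1def
        have hm1M : m1 ∈ M := hfM z hzM
        have hm1T : m1 ∈ T := hMsubT hm1M
        have hm1u : m1 ≠ u := (mem_erase.1 hm1M).1
        have hd0Tm1 : d0 ∉ T.erase m1 := fun h => hd0T (mem_of_mem_erase h)
        have hbd_d0 : bd G d0 (T.erase m1) = 1 := by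
          refine le_antisymm (le_trans (bd_mono G (erase_subset _ _)) (le_of_eq hd0bd)) ?_
          refine bd_pos G (w := u) (mem_erase.2 ⟨fun h => hm1u h.symm, hu'T⟩) ?_ ?_
          · exact Ne.symm hd0ne'
          · exact hd0adj'
        have hT' : insert d0 (T.erase m1) ∈ C := by
          rw [Finset.mem_powersetCard_univ, card_insert_of_notMem hd0Tm1,
            card_erase_of_mem hm1T, hTcard]
          omega
        have hmuT' : mu G (insert d0 (T.erase m1)) = γ := by
          have e1 : mu G T = mu G (T.erase m1) + 2 * bd G m1 (T.erase m1) := mu_erase G hm1T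
          rw [hones' m1 hm1M] at e1
          have e2 : mu G (insert d0 (T.erase m1))
              = mu G (T.erase m1) + 2 * bd G d0 (T.erase m1) := mu_insert G hd0Tm1
          rw [hbd_d0] at e2
          omega
        have hzm1 : z ≠ m1 := by
          intro h
          rw [hm1def] at h
          exact hfne z hzM h.symm
        have hzT' : z ∈ insert d0 (T.erase m1) :=
          mem_insert_of_mem (mem_erase.2 ⟨hzm1, hMsubT hzM⟩)
        have hd0z : d0 ≠ z := by
          intro h
          exact hd0T (by rw [h]; exact hMsubT hzM)
        have hAdjzd0 : G.Adj z d0 := by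
          by_contra hn
          have : 1 ≤ bd G z Dc := bd_pos G hd0D hd0z hn
          omega
        have hzbd' : bd G z ((insert d0 (T.erase m1)).erase z) = 0 := by
          rw [Finset.erase_insert_of_ne hd0z]
          rw [bd_insert G (fun h => hd0Tm1 (mem_of_mem_erase h))]
          have hite : ¬(d0 ≠ z ∧ ¬ G.Adj z d0) := fun h => h.2 hAdjzd0
          rw [if_neg hite, add_zero]
          unfold bd
          rw [card_eq_zero, filter_eq_empty_iff]
          rintro x hx ⟨hxz, hxadj⟩
          have hx1 := mem_erase.1 hx
          have hx2 := mem_erase.1 hx1.2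
          have hxfz := hf2 z hzM x (mem_erase.2 ⟨hxz, mem_of_mem_erase hx1.2⟩) hxz hxadj
          rw [← hm1def] at hxfz
          exact hx2.1 hxfz
        have hUmem : ((insert d0 (T.erase m1), z) : Finset V × V) ∈ U := by
          rw [hUdef, mem_filter, mem_product, mem_filter]
          exact ⟨⟨⟨hT', hmuT'⟩, mem_univ _⟩, hzT', hzbd'⟩
        have hgle : bd G u (univ.erase u) ≤ bd G z (univ.erase z) := hpmin _ hUmem
        have hgz : bd G z (univ.erase z) = 1 := by
          have hsplit : univ.erase z = (T.erase z) ∪ Dc := by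
            ext x
            simp only [hDdef, mem_erase, mem_union, mem_sdiff, mem_univ, true_and]
            constructor
            · intro h
              by_cases hxT : x ∈ T
              · exact Or.inl ⟨h.1, hxT⟩
              · exact Or.inr hxT
            · rintro (⟨h1, _⟩ | h1)
              · exact ⟨h1, trivial⟩
              · exact ⟨fun h => h1 (h ▸ hMsubT hzM), trivial⟩
          have hdisj2 : Disjoint (T.erase z) Dc := by
            rw [disjoint_left]
            exact fun x hx hx2 => hDT x hx2 (mem_of_mem_erase hx)
          rw [hsplit, bd_union G hdisj2, hones' z hzM, hzD]
        have hgu : bd G u (univ.erase u) = 1 := by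
          have h1 : 1 ≤ bd G u (univ.erase u) :=
            bd_pos G (mem_erase.2 ⟨hd0ne', mem_univ _⟩) hd0ne' (fun h => hd0adj' h.symm)
          omega
        have hUprop : ∀ w, w ≠ u → ¬ G.Adj u w → w = d0 := by
          intro w hne hnadj
          by_contra hned0
          have h2 : 2 ≤ bd G u (univ.erase u) := by
            have : 1 < (((univ.erase u)).filter (fun x => x ≠ u ∧ ¬ G.Adj u x)).card := by
              refine one_lt_card.2 ⟨d0, ?_, w, ?_, fun h => hned0 h.symm⟩
              · exact mem_filter.2 ⟨mem_erase.2 ⟨hd0ne', mem_univ _⟩, hd0ne',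
                  fun h => hd0adj' h.symm⟩
              · exact mem_filter.2 ⟨mem_erase.2 ⟨hne, mem_univ _⟩, hne, hnadj⟩
            unfold bd
            omega
          omega
        -- D' with strong degree facts
        set D' := Dc.erase d0 with hD'def
        have hD'card : D'.card = γ - 2 := by
          rw [hD'def, card_erase_of_mem hd0D, hDcard]
          omega
        have hXge2 : ∀ d ∈ D', 2 ≤ bd G d M := by
          intro d hd
          have hdD : d ∈ Dc := mem_of_mem_erase hd
          have hdT : d ∉ T := hDT d hdD
          have hdd0 : d ≠ d0 := (mem_erase.1 hd).1
          have hge2 : 2 ≤ bd G d T := by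
            rcases Nat.lt_or_ge (bd G d T) 2 with h | h
            · exfalso
              have h1 : bd G d T = 1 := by have := he1 d hdT; omega
              have hnadj := he2 d hdT h1
              refine hdd0 (hUprop d ?_ ?_)
              · intro hh; exact hdT (hh ▸ hu'T)
              · exact fun hh => hnadj hh.symm
            · exact h
          have hTM : T = insert u M := (insert_erase hu'T).symm
          have hsplit : bd G d T = bd G d M + if u ≠ d ∧ ¬ G.Adj d u then 1 else 0 := by
            conv_lhs => rw [hTM]
            exact bd_insert G huM
          have hite : ¬(u ≠ d ∧ ¬ G.Adj d u) := by
            rintro ⟨h1, h2⟩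
            refine hdd0 (hUprop d (Ne.symm h1) (fun hh => h2 hh.symm))
          rw [if_neg hite, add_zero] at hsplit
          omega
        -- transversal family
        set Tv := (M.powerset).filter (fun S => ∀ t ∈ M, (t ∈ S ↔ f t ∉ S)) with hTvdef
        have hTvsub : ∀ S ∈ Tv, S ⊆ M := fun S hS => mem_powerset.1 (mem_filter.1 hS).1
        have hTvtrans : ∀ S ∈ Tv, ∀ t ∈ M, (t ∈ S ↔ f t ∉ S) :=
          fun S hS => (mem_filter.1 hS).2
        have hTvne : Tv.Nonempty := by
          let e : V ≃ Fin (Fintype.card V) := Fintype.equivFin V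
          refine ⟨M.filter (fun t => (e t : ℕ) < (e (f t) : ℕ)), ?_⟩
          rw [hTvdef, mem_filter, mem_powerset]
          refine ⟨filter_subset _ _, fun t ht => ?_⟩
          have hft := hfM t ht
          have hfft := hff t ht
          have hene : (e t : ℕ) ≠ (e (f t) : ℕ) := by
            intro h
            exact hfne t ht (e.injective (Fin.val_injective h)).symm
          simp only [mem_filter]
          constructor
          · rintro ⟨-, hlt⟩ ⟨-, hlt2⟩
            rw [hfft] at hlt2
            omega
          · intro hnot
            refine ⟨ht, ?_⟩
            by_contra hge
            exact hnot ⟨hft, by rw [hfft]; omega⟩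
        have hTvcard : ∀ S ∈ Tv, 2 * S.card = γ := by
          intro S hS
          have hSM := hTvsub S hS
          have hSt := hTvtrans S hS
          have himg : M \ S = S.image f := by
            ext x
            simp only [mem_sdiff, mem_image]
            constructor
            · rintro ⟨hxM, hxS⟩
              refine ⟨f x, ?_, hff x hxM⟩
              have h1 := hSt (f x) (hfM x hxM)
              rw [hff x hxM] at h1
              tauto
            · rintro ⟨y, hyS, rfl⟩
              exact ⟨hfM y (hSM hyS), (hSt y (hSM hyS)).1 hyS⟩
          have hinj : Set.InjOn f ↑S := by
            intro a ha b hb h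
            have h1 := hff a (hSM ha)
            rw [h, hff b (hSM hb)] at h1
            exact h1.symm
          have h1 : (M \ S).card = S.card := by rw [himg, card_image_of_injOn hinj]
          have h2 := card_sdiff_of_subset hSM
          have h3 := card_le_card hSM
          omega
        have hTvpos : 0 < Tv.card := card_pos.2 hTvne
        -- each d in D' is "mono" for at most half of the transversals
        have hhalf : ∀ d ∈ D', 2 * (Tv.filter (fun S =>
            (∀ x ∈ M, (x ≠ d ∧ ¬ G.Adj d x) → x ∈ S) ∨
            (∀ x ∈ M, (x ≠ d ∧ ¬ G.Adj d x) → x ∉ S))).card ≤ Tv.card := by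
          intro d hd
          have h2 := hXge2 d hd
          have h2' : 1 < (M.filter (fun w => w ≠ d ∧ ¬ G.Adj d w)).card := by
            unfold bd at h2
            omega
          obtain ⟨x1, hx1, x2, hx2, hx12⟩ := one_lt_card.1 h2'
          have hx1f := mem_filter.1 hx1
          have hx2f := mem_filter.1 hx2
          by_cases hwide : x2 = f x1
          · have hempt : Tv.filter (fun S =>
                (∀ x ∈ M, (x ≠ d ∧ ¬ G.Adj d x) → x ∈ S) ∨
                (∀ x ∈ M, (x ≠ d ∧ ¬ G.Adj d x) → x ∉ S)) = ∅ := by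
              rw [filter_eq_empty_iff]
              intro S hS hmono
              have hSt := hTvtrans S hS
              rcases hmono with hA | hB
              · have hin1 : x1 ∈ S := hA x1 hx1f.1 hx1f.2
                have hin2 : x2 ∈ S := hA x2 hx2f.1 hx2f.2
                exact ((hSt x1 hx1f.1).1 hin1) (hwide ▸ hin2)
              · have hno1 : x1 ∉ S := hB x1 hx1f.1 hx1f.2
                have hfx1 : f x1 ∈ S := by
                  have := hSt x1 hx1f.1
                  tauto
                exact (hB x2 hx2f.1 hx2f.2) (hwide ▸ hfx1)
            rw [hempt]
            simp
          · set P : Finset V := {x1, f x1} with hPdef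
            have hx1M := hx1f.1
            have hfx1M := hfM x1 hx1M
            have hPM : P ⊆ M := by
              intro x hx
              rcases mem_insert.1 hx with rfl | hx'
              · exact hx1M
              · rw [mem_singleton.1 hx']
                exact hfx1M
            have hPf : ∀ t ∈ M, (t ∈ P ↔ f t ∈ P) := by
              intro t ht
              simp only [hPdef, mem_insert, mem_singleton]
              constructor
              · rintro (rfl | rfl)
                · right; rfl
                · left; exact hff x1 hx1M
              · rintro (h | h)
                · right
                  rw [← h]
                  exact (hff t ht).symm
                · left
                  have h1 := hff t ht
                  rw [h] at h1
                  rw [← h1, hff x1 hx1M]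
            have hx1P : x1 ∈ P := mem_insert_self _ _
            have hfx1P : f x1 ∈ P := mem_insert_of_mem (mem_singleton_self _)
            have hx2P : x2 ∉ P := by
              simp only [hPdef, mem_insert, mem_singleton]
              rintro (h | h)
              · exact hx12 h.symm
              · exact hwide h
            have hflipTv : ∀ S ∈ Tv, symmDiff S P ∈ Tv := by
              intro S hS
              have hSM := hTvsub S hS
              have hSt := hTvtrans S hS
              rw [hTvdef, mem_filter, mem_powerset]
              constructor
              · intro x hx
                rcases Finset.mem_symmDiff.1 hx with ⟨h1, -⟩ | ⟨h1, -⟩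
                · exact hSM h1
                · exact hPM h1
              · intro t ht
                have horig := hSt t ht
                by_cases htP : t ∈ P
                · have hftP : f t ∈ P := (hPf t ht).1 htP
                  have e1 : t ∈ symmDiff S P ↔ t ∉ S := by
                    rw [Finset.mem_symmDiff]
                    tauto
                  have e2 : f t ∈ symmDiff S P ↔ f t ∉ S := by
                    rw [Finset.mem_symmDiff]
                    tauto
                  rw [e1, e2]
                  tauto
                · have hftP : f t ∉ P := fun h => htP ((hPf t ht).2 h)
                  have e1 : t ∈ symmDiff S P ↔ t ∈ S := by
                    rw [Finset.mem_symmDiff]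
                    tauto
                  have e2 : f t ∈ symmDiff S P ↔ f t ∈ S := by
                    rw [Finset.mem_symmDiff]
                    tauto
                  rw [e1, e2]
                  exact horig
            have hmapsto : ∀ S ∈ Tv.filter (fun S =>
                (∀ x ∈ M, (x ≠ d ∧ ¬ G.Adj d x) → x ∈ S) ∨
                (∀ x ∈ M, (x ≠ d ∧ ¬ G.Adj d x) → x ∉ S)),
                symmDiff S P ∈ Tv.filter (fun S => ¬ ((∀ x ∈ M, (x ≠ d ∧ ¬ G.Adj d x) → x ∈ S) ∨
                (∀ x ∈ M, (x ≠ d ∧ ¬ G.Adj d x) → x ∉ S))) := by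
              intro S hS'
              obtain ⟨hSTv, hmono⟩ := mem_filter.1 hS'
              refine mem_filter.2 ⟨hflipTv S hSTv, ?_⟩
              rcases hmono with hA | hB
              · have hx1S : x1 ∈ S := hA x1 hx1f.1 hx1f.2
                have hx2S : x2 ∈ S := hA x2 hx2f.1 hx2f.2
                have hx1out : x1 ∉ symmDiff S P := by
                  rw [Finset.mem_symmDiff]
                  tauto
                have hx2in : x2 ∈ symmDiff S P := by
                  rw [Finset.mem_symmDiff]
                  tauto
                rintro (hA' | hB')
                · exact hx1out (hA' x1 hx1f.1 hx1f.2)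
                · exact (hB' x2 hx2f.1 hx2f.2) hx2in
              · have hx1S : x1 ∉ S := hB x1 hx1f.1 hx1f.2
                have hx2S : x2 ∉ S := hB x2 hx2f.1 hx2f.2
                have hx1in : x1 ∈ symmDiff S P := by
                  rw [Finset.mem_symmDiff]
                  tauto
                have hx2out : x2 ∉ symmDiff S P := by
                  rw [Finset.mem_symmDiff]
                  tauto
                rintro (hA' | hB')
                · exact hx2out (hA' x2 hx2f.1 hx2f.2)
                · exact (hB' x1 hx1f.1 hx1f.2) hx1in
            have hinj : Set.InjOn (fun S => symmDiff S P)
                ↑(Tv.filter (fun S =>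
                  (∀ x ∈ M, (x ≠ d ∧ ¬ G.Adj d x) → x ∈ S) ∨
                  (∀ x ∈ M, (x ≠ d ∧ ¬ G.Adj d x) → x ∉ S))) := by
              intro a _ b _ h
              have h2'' := congrArg (fun X => symmDiff X P) h
              simpa only [symmDiff_symmDiff_cancel_right] using h2''
            have hle := card_le_card_of_injOn _ hmapsto hinj
            have hsplit := card_filter_add_card_filter_not (s := Tv)
              (p := fun S => (∀ x ∈ M, (x ≠ d ∧ ¬ G.Adj d x) → x ∈ S) ∨
                (∀ x ∈ M, (x ≠ d ∧ ¬ G.Adj d x) → x ∉ S))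
            omega
        -- exchange and pigeonhole
        have hexch : ∑ S ∈ Tv, (D'.filter (fun d => (∀ x ∈ M, (x ≠ d ∧ ¬ G.Adj d x) → x ∈ S) ∨
              (∀ x ∈ M, (x ≠ d ∧ ¬ G.Adj d x) → x ∉ S))).card
            = ∑ d ∈ D', (Tv.filter (fun S => (∀ x ∈ M, (x ≠ d ∧ ¬ G.Adj d x) → x ∈ S) ∨
              (∀ x ∈ M, (x ≠ d ∧ ¬ G.Adj d x) → x ∉ S))).card := by
          simp_rw [card_filter]
          exact sum_comm
        obtain ⟨S₀, hS₀Tv, hS₀⟩ : ∃ S₀ ∈ Tv,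
            2 * (D'.filter (fun d => (∀ x ∈ M, (x ≠ d ∧ ¬ G.Adj d x) → x ∈ S₀) ∨
              (∀ x ∈ M, (x ≠ d ∧ ¬ G.Adj d x) → x ∉ S₀))).card ≤ γ - 2 := by
          by_contra hcon
          push_neg at hcon
          have h1 : Tv.card * (γ - 2 + 1) ≤ ∑ S ∈ Tv,
              2 * (D'.filter (fun d => (∀ x ∈ M, (x ≠ d ∧ ¬ G.Adj d x) → x ∈ S) ∨
                (∀ x ∈ M, (x ≠ d ∧ ¬ G.Adj d x) → x ∉ S))).card := by
            rw [← smul_eq_mul, ← sum_const]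
            exact sum_le_sum (fun S hS => by have := hcon S hS; omega)
          rw [← mul_sum, hexch] at h1
          have h3 : 2 * ∑ d ∈ D', (Tv.filter (fun S =>
              (∀ x ∈ M, (x ≠ d ∧ ¬ G.Adj d x) → x ∈ S) ∨
              (∀ x ∈ M, (x ≠ d ∧ ¬ G.Adj d x) → x ∉ S))).card ≤ (γ - 2) * Tv.card := by
            rw [mul_sum]
            calc ∑ d ∈ D', 2 * (Tv.filter (fun S =>
                  (∀ x ∈ M, (x ≠ d ∧ ¬ G.Adj d x) → x ∈ S) ∨
                  (∀ x ∈ M, (x ≠ d ∧ ¬ G.Adj d x) → x ∉ S))).card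
                ≤ ∑ _d ∈ D', Tv.card := sum_le_sum hhalf
              _ = (γ - 2) * Tv.card := by rw [sum_const, smul_eq_mul, hD'card]
          have h4 : Tv.card * (γ - 2 + 1) ≤ (γ - 2) * Tv.card := le_trans h1 h3
          rw [Nat.mul_add, Nat.mul_one, Nat.mul_comm] at h4
          omega
        -- build the violating partition
        obtain ⟨K, hKγ⟩ : ∃ K, γ = 2 * K := ⟨γ / 2, by omega⟩
        set PA := D'.filter (fun d => ∀ x ∈ M, (x ≠ d ∧ ¬ G.Adj d x) → x ∉ S₀) with hPAdef
        set PB := D'.filter (fun d => ∀ x ∈ M, (x ≠ d ∧ ¬ G.Adj d x) → x ∈ S₀) with hPBdef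
        have hPABdisj : Disjoint PA PB := by
          rw [disjoint_left]
          intro d hdA hdB
          have h2 := hXge2 d (mem_filter.1 hdA).1
          have h2' : 0 < (M.filter (fun w => w ≠ d ∧ ¬ G.Adj d w)).card := by
            unfold bd at h2
            omega
          obtain ⟨x, hx⟩ := card_pos.1 h2'
          have hxf := mem_filter.1 hx
          exact ((mem_filter.1 hdA).2 x hxf.1 hxf.2) ((mem_filter.1 hdB).2 x hxf.1 hxf.2)
        have hPABsub : PA ∪ PB ⊆ D'.filter (fun d =>
            (∀ x ∈ M, (x ≠ d ∧ ¬ G.Adj d x) → x ∈ S₀) ∨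
            (∀ x ∈ M, (x ≠ d ∧ ¬ G.Adj d x) → x ∉ S₀)) := by
          intro d hd
          rcases mem_union.1 hd with h | h
          · exact mem_filter.2 ⟨(mem_filter.1 h).1, Or.inr (mem_filter.1 h).2⟩
          · exact mem_filter.2 ⟨(mem_filter.1 h).1, Or.inl (mem_filter.1 h).2⟩
        have hPABcard : 2 * (PA.card + PB.card) ≤ γ - 2 := by
          have hc := card_le_card hPABsub
          rw [card_union_of_disjoint hPABdisj] at hc
          omega
        set Rest := D' \ (PA ∪ PB) with hRestdef
        have hRestcard : Rest.card = D'.card - (PA.card + PB.card) := by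
          rw [hRestdef, card_sdiff_of_subset (union_subset (filter_subset _ _) (filter_subset _ _)),
            card_union_of_disjoint hPABdisj]
        have hFillex : K - 1 - PA.card ≤ Rest.card := by
          rw [hRestcard, hD'card]
          omega
        obtain ⟨FA, hFAsub, hFAcard⟩ := Finset.exists_subset_card_eq hFillex
        set AD := PA ∪ FA with hADdef
        have hFAPA : Disjoint PA FA := by
          rw [disjoint_left]
          intro x hx hx2
          exact (mem_sdiff.1 (hFAsub hx2)).2 (mem_union_left _ hx)
        have hADcard : AD.card = K - 1 := by
          rw [hADdef, card_union_of_disjoint hFAPA, hFAcard]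
          have h5 : 2 * PA.card ≤ γ - 2 := by omega
          omega
        have hADsub : AD ⊆ D' := by
          rw [hADdef]
          exact union_subset (filter_subset _ _) (hFAsub.trans sdiff_subset)
        set A := (S₀ ∪ AD) ∪ {u} with hAdef
        have hS₀M : S₀ ⊆ M := hTvsub S₀ hS₀Tv
        have hS₀card2 : 2 * S₀.card = γ := hTvcard S₀ hS₀Tv
        have hMD : ∀ x ∈ M, x ∉ D' := fun x hx h =>
          hDT x (mem_of_mem_erase h) (hMsubT hx)
        have hdisjSA : Disjoint S₀ AD := by
          rw [disjoint_left]
          intro x hx hx2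
          exact hMD x (hS₀M hx) (hADsub hx2)
        have huS₀ : u ∉ S₀ := fun h => huM (hS₀M h)
        have huAD : u ∉ AD := fun h => hDT u (mem_of_mem_erase (hADsub h)) hu'T
        have hAcard : A.card = γ := by
          rw [hAdef, card_union_of_disjoint ?_, card_union_of_disjoint hdisjSA,
            card_singleton]
          · omega
          · refine disjoint_singleton_right.2 ?_
            rw [mem_union]
            rintro (h | h)
            · exact huS₀ h
            · exact huAD h
        have hmemA : ∀ x, x ∈ A ↔ (x ∈ S₀ ∨ x ∈ AD ∨ x = u) := by
          intro x
          rw [hAdef]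
          simp only [mem_union, mem_singleton]
          tauto
        have hcomplA : (univ \ A).card = γ := by
          rw [card_sdiff_of_subset (subset_univ _), hVcard, hAcard]
          omega
        have hkillA : ¬ RReachable G γ A := by
          apply nreach
          · exact le_of_eq hcomplA
          · intro i hi
            rcases (hmemA i).1 hi with hiS | hiAD | rfl
            · have hiM := hS₀M hiS
              have hfi : f i ∉ A := by
                rw [hmemA]
                rintro (h | h | h)
                · exact ((hTvtrans S₀ hS₀Tv) i hiM).1 hiS h
                · exact hMD (f i) (hfM i hiM) (hADsub h)
                · exact (mem_erase.1 (hfM i hiM)).1 h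
              exact bd_pos G (mem_sdiff.2 ⟨mem_univ _, hfi⟩) (hfne i hiM) (hfnadj i hiM)
            · have hiD' : i ∈ D' := hADsub hiAD
              have hnotPB : i ∉ PB := by
                rcases mem_union.1 hiAD with h | h
                · exact fun hb => (disjoint_left.1 hPABdisj) h hb
                · exact fun hb => (mem_sdiff.1 (hFAsub h)).2 (mem_union_right _ hb)
              have hex : ∃ x ∈ M, (x ≠ i ∧ ¬ G.Adj i x) ∧ x ∉ S₀ := by
                by_contra hcon
                push_neg at hcon
                exact hnotPB (mem_filter.2 ⟨hiD', fun x hx hcond => hcon x hx hcond⟩)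
              obtain ⟨x, hxM, hxcond, hxS₀⟩ := hex
              have hxA : x ∉ A := by
                rw [hmemA]
                rintro (h | h | h)
                · exact hxS₀ h
                · exact hMD x hxM (hADsub h)
                · exact (mem_erase.1 hxM).1 h
              exact bd_pos G (mem_sdiff.2 ⟨mem_univ _, hxA⟩) hxcond.1 hxcond.2
            · have hd0A : d0 ∉ A := by
                rw [hmemA]
                rintro (h | h | h)
                · exact hd0T (hMsubT (hS₀M h))
                · exact (mem_erase.1 (hADsub h)).1 rfl
                · exact hd0ne' h
              exact bd_pos G (mem_sdiff.2 ⟨mem_univ _, hd0A⟩) hd0ne'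
                (fun h => hd0adj' h.symm)
        have hcomplB : univ \ (univ \ A) = A := by
          ext x
          simp [mem_sdiff]
        have hkillB : ¬ RReachable G γ (univ \ A) := by
          apply nreach
          · rw [hcomplB]
            exact le_of_eq hAcard
          · intro i hiB
            rw [hcomplB]
            have hiA : i ∉ A := (mem_sdiff.1 hiB).2
            by_cases hiT : i ∈ T
            · have hiu : i ≠ u := fun h => hiA ((hmemA i).2 (Or.inr (Or.inr h)))
              have hiM : i ∈ M := mem_erase.2 ⟨hiu, hiT⟩
              have hiS₀ : i ∉ S₀ := fun h => hiA ((hmemA i).2 (Or.inl h))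
              have hfiS₀ : f i ∈ S₀ := by
                have := hTvtrans S₀ hS₀Tv i hiM
                tauto
              exact bd_pos G ((hmemA (f i)).2 (Or.inl hfiS₀)) (hfne i hiM) (hfnadj i hiM)
            · have hiD : i ∈ Dc := mem_sdiff.2 ⟨mem_univ _, hiT⟩
              by_cases hid0 : i = d0
              · subst hid0
                exact bd_pos G ((hmemA u).2 (Or.inr (Or.inr rfl))) (Ne.symm hd0ne') hd0adj'
              · have hiD' : i ∈ D' := mem_erase.2 ⟨hid0, hiD⟩
                have hiPA : i ∉ PA := fun h =>
                  hiA ((hmemA i).2 (Or.inr (Or.inl (mem_union_left _ h))))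
                have hex : ∃ x ∈ M, (x ≠ i ∧ ¬ G.Adj i x) ∧ x ∈ S₀ := by
                  by_contra hcon
                  push_neg at hcon
                  exact hiPA (mem_filter.2 ⟨hiD', fun x hx hcond => hcon x hx hcond⟩)
                obtain ⟨x, hxM, hxcond, hxS₀⟩ := hex
                exact bd_pos G ((hmemA x).2 (Or.inl hxS₀)) hxcond.1 hxcond.2
        have hAne : A.Nonempty := card_pos.1 (by omega)
        have hBne : (univ \ A).Nonempty := card_pos.1 (by omega)
        have hdisjAB : Disjoint A (univ \ A) := by
          rw [disjoint_left]
          intro x hx hx2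
          exact (mem_sdiff.1 hx2).2 hx
        rcases hrob2 A (univ \ A) hAne hBne hdisjAB with h | h
        · exact hkillA h
        · exact hkillB h



end Main

/-- If `G` is a graph on an even number `n` of vertices and `γ = n/2`, and `G` is
`γ`-robust, then there is a subset `V_S` of `γ + 1` vertices such that the induced
subgraph of `G` on `V_S` has at least `⌊(γ² + 2)/2⌋` edges. -/
theorem stmt4 [Fintype V] [DecidableEq V] (G : SimpleGraph V) [DecidableRel G.Adj]
    (n γ : ℕ) (hn : Fintype.card V = n) (heven : Even n) (hγ : γ = n / 2)
    (hrob : RRobust G γ) :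
    ∃ VS : Finset V, VS.card = γ + 1 ∧
      (γ ^ 2 + 2) / 2 ≤ {e : Sym2 V | e ∈ G.edgeSet ∧ ∀ v ∈ e, v ∈ VS}.ncard := by
  classical
  have hcard : Fintype.card V = 2 * γ := by
    obtain ⟨m, hm⟩ := heven
    omega
  obtain ⟨T, hTcard, hTmu⟩ := main_lemma G γ hcard hrob
  obtain ⟨E, hEset, hEcount⟩ := edges_count G T
  refine ⟨T, hTcard, ?_⟩
  rw [← hEset, Set.ncard_coe_finset]
  rw [hTcard] at hEcount
  have hsq : γ ^ 2 % 2 = γ % 2 := by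
    rcases Nat.even_or_odd γ with ⟨m, hm⟩ | ⟨m, hm⟩ <;> subst hm
    · have : (m + m) ^ 2 = 2 * (2 * m * m) := by ring
      omega
    · have : (2 * m + 1) ^ 2 = 2 * (2 * m * m + 2 * m) + 1 := by ring
      omega
  have hexp : (γ + 1) * (γ + 1 - 1) = γ ^ 2 + γ := by
    have : γ + 1 - 1 = γ := by omega
    rw [this]; ring
  rw [hexp] at hEcount
  omega
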